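/- The N-wise soft T₀ property is hereditary: if (X, τ₁,…,τ_N, E) is an N-wise soft T₀-space and Y is a nonempty subset of X, then the soft N-topological subspace (Y, (τ₁)_Y,…,(τ_N)_Y, E), where (τ_i)_Y = { e ↦ F(e) ∩ Y : F ∈ τ_i }, is an N-wise soft T₀-space. -/
import Mathlib


/-- A soft topology on `X` with parameter set `E`. -/
def IsSoftTopology {X E : Type*} (τ : Set (E → Set X)) : Prop :=
  (fun _ => (∅ : Set X)) ∈ τ ∧
  (fun _ => (Set.univ : Set X)) ∈ τ ∧
  (∀ F G, F ∈ τ → G ∈ τ → (fun e => F e ∩ G e) ∈ τ) ∧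
  (∀ S : Set (E → Set X), S ⊆ τ → (fun e => ⋃ F ∈ S, F e) ∈ τ)

/-- A soft set is soft `N`-open if it belongs to some of the `N` soft topologies. -/
def IsSoftNOpen {X E : Type*} {N : ℕ} (τ : Fin N → Set (E → Set X))
    (A : E → Set X) : Prop :=
  ∃ i, A ∈ τ i

/-- `N`-wise soft `T₀` separation axiom. -/
def IsNwiseSoftT0 {X E : Type*} {N : ℕ} (τ : Fin N → Set (E → Set X)) : Prop :=
  ∀ (x : X) (α : E) (y : X) (β : E), (x ≠ y ∨ α ≠ β) →
    (∃ A, IsSoftNOpen τ A ∧ x ∈ A α ∧ y ∉ A β) ∨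
    (∃ B, IsSoftNOpen τ B ∧ y ∈ B β ∧ x ∉ B α)

/-- `N`-wise soft `T₁` separation axiom. -/
def IsNwiseSoftT1 {X E : Type*} {N : ℕ} (τ : Fin N → Set (E → Set X)) : Prop :=
  ∀ (x : X) (α : E) (y : X) (β : E), (x ≠ y ∨ α ≠ β) →
    ∃ A, IsSoftNOpen τ A ∧ x ∈ A α ∧ y ∉ A β

/-- `N`-wise soft `T₂` (Hausdorff) separation axiom. -/
def IsNwiseSoftT2 {X E : Type*} {N : ℕ} (τ : Fin N → Set (E → Set X)) : Prop :=
  ∀ (x : X) (α : E) (y : X) (β : E), (x ≠ y ∨ α ≠ β) →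
    ∃ A B, IsSoftNOpen τ A ∧ IsSoftNOpen τ B ∧ x ∈ A α ∧ y ∈ B β ∧
      ∀ e, A e ∩ B e = ∅

/-- Soft `T₀` separation axiom for a single soft topology. -/
def IsSoftT0 {X E : Type*} (τ : Set (E → Set X)) : Prop :=
  ∀ (x : X) (α : E) (y : X) (β : E), (x ≠ y ∨ α ≠ β) →
    (∃ A ∈ τ, x ∈ A α ∧ y ∉ A β) ∨ (∃ B ∈ τ, y ∈ B β ∧ x ∉ B α)

/-- Soft `T₁` separation axiom for a single soft topology. -/
def IsSoftT1 {X E : Type*} (τ : Set (E → Set X)) : Prop :=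
  ∀ (x : X) (α : E) (y : X) (β : E), (x ≠ y ∨ α ≠ β) →
    ∃ A ∈ τ, x ∈ A α ∧ y ∉ A β

/-- Soft `T₂` separation axiom for a single soft topology. -/
def IsSoftT2 {X E : Type*} (τ : Set (E → Set X)) : Prop :=
  ∀ (x : X) (α : E) (y : X) (β : E), (x ≠ y ∨ α ≠ β) →
    ∃ A ∈ τ, ∃ B ∈ τ, x ∈ A α ∧ y ∈ B β ∧ ∀ e, A e ∩ B e = ∅

theorem NwiseSoftT0_hereditary {X E : Type*} {N : ℕ}
    (τ : Fin N → Set (E → Set X)) (hτ : ∀ i, IsSoftTopology (τ i))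
    (h : IsNwiseSoftT0 τ) (Y : Set X) (hY : Y.Nonempty) :
    ∀ (x : X) (α : E) (y : X) (β : E), x ∈ Y → y ∈ Y → (x ≠ y ∨ α ≠ β) →
      (∃ A, IsSoftNOpen (fun i => {G : E → Set X | ∃ F ∈ τ i, G = fun e => F e ∩ Y}) A ∧
        x ∈ A α ∧ y ∉ A β) ∨
      (∃ B, IsSoftNOpen (fun i => {G : E → Set X | ∃ F ∈ τ i, G = fun e => F e ∩ Y}) B ∧
        y ∈ B β ∧ x ∉ B α) := by
  intro x α y β hx hy hne
  rcases h x α y β hne with ⟨A, ⟨i, hA⟩, hxA, hyA⟩ | ⟨B, ⟨i, hB⟩, hyB, hxB⟩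
  · exact Or.inl ⟨fun e => A e ∩ Y, ⟨i, A, hA, rfl⟩, ⟨hxA, hx⟩, fun hc => hyA hc.1⟩
  · exact Or.inr ⟨fun e => B e ∩ Y, ⟨i, B, hB, rfl⟩, ⟨hyB, hy⟩, fun hc => hxB hc.1⟩
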